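/- Moment characterization forcing f_0 = 1: if a_0, a_1, a_2, ... are real numbers such that for every natural number k, ∑_{i≥0} a_{2i} C_{k+i} = C_k and ∑_{i≥0} a_{2i+1} C_{k+1+i} = 0 (with only finitely many a_i nonzero), then a_0 = 1 and a_i = 0 for all i ≥ 1. -/
import Mathlib

open Polynomial Finset

private lemma catalan_pos' (n : ℕ) : 0 < catalan n := by
  rcases Nat.eq_zero_or_pos (catalan n) with h | h
  · have h2 := succ_mul_catalan_eq_centralBinom n
    rw [h, mul_zero] at h2
    exact absurd h2.symm (Nat.centralBinom_ne_zero n)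
  · exact h

private lemma catalan_ratio (m : ℕ) :
    (m + 2) * catalan (m + 1) = (4 * m + 2) * catalan m := by
  have h1 := succ_mul_catalan_eq_centralBinom (m + 1)
  have h2 := Nat.succ_mul_centralBinom_succ m
  have h3 := succ_mul_catalan_eq_centralBinom m
  have key : (m + 1) * ((m + 2) * catalan (m + 1)) = (m + 1) * ((4 * m + 2) * catalan m) := by
    calc (m + 1) * ((m + 2) * catalan (m + 1))
        = (m + 1) * ((m + 1 + 1) * catalan (m + 1)) := by ring
      _ = (m + 1) * (m + 1).centralBinom := by rw [h1]
      _ = 2 * (2 * m + 1) * m.centralBinom := h2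
      _ = 2 * (2 * m + 1) * ((m + 1) * catalan m) := by rw [h3]
      _ = (m + 1) * ((4 * m + 2) * catalan m) := by ring
  exact Nat.eq_of_mul_eq_mul_left (Nat.succ_pos m) key

private lemma catalan_prod_identity (k i : ℕ) :
    (catalan (k + i) : ℝ) * ∏ l ∈ Finset.range i, ((k : ℝ) + (l : ℝ) + 2) =
      (catalan k : ℝ) * ∏ l ∈ Finset.range i, (4 * (k : ℝ) + 4 * (l : ℝ) + 2) := by
  induction i with
  | zero => simp
  | succ n ih =>
    rw [Finset.prod_range_succ, Finset.prod_range_succ]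
    rw [show k + (n + 1) = k + n + 1 from rfl]
    have h : ((k : ℝ) + (n : ℝ) + 2) * (catalan (k + n + 1) : ℝ)
        = (4 * ((k : ℝ) + (n : ℝ)) + 2) * (catalan (k + n) : ℝ) := by
      exact_mod_cast catalan_ratio (k + n)
    linear_combination (∏ l ∈ Finset.range n, ((k : ℝ) + (l : ℝ) + 2)) * h
      + (4 * (k : ℝ) + 4 * (n : ℝ) + 2) * ih

private lemma catalan_shifts_indep (N : ℕ) :
    ∀ d : ℕ → ℝ, (∀ i, N < i → d i = 0) →
    (∀ k : ℕ, 1 ≤ k → ∑ i ∈ Finset.range (N + 1), d i * (catalan (k + i) : ℝ) = 0) →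
    ∀ i, d i = 0 := by
  induction N with
  | zero =>
    intro d hd hsum i
    rcases Nat.eq_zero_or_pos i with h | h
    · subst h
      have := hsum 1 le_rfl
      simpa [catalan_one] using this
    · exact hd i h
  | succ N ih =>
    intro d hd hsum
    set Q : ℝ[X] := ∑ i ∈ Finset.range (N + 2), Polynomial.C (d i)
        * (∏ l ∈ Finset.range i, (Polynomial.C 4 * X + Polynomial.C ((l : ℝ) * 4) + Polynomial.C 2))
        * (∏ l ∈ Finset.Ico i (N + 1), (X + Polynomial.C (l : ℝ) + Polynomial.C 2)) with hQdef
    have hQeval : ∀ x : ℝ, Q.eval x = ∑ i ∈ Finset.range (N + 2), d i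
        * (∏ l ∈ Finset.range i, (4 * x + 4 * (l : ℝ) + 2))
        * (∏ l ∈ Finset.Ico i (N + 1), (x + (l : ℝ) + 2)) := by
      intro x
      simp only [hQdef, Polynomial.eval_finset_sum, Polynomial.eval_mul, Polynomial.eval_prod,
        Polynomial.eval_add, Polynomial.eval_C, Polynomial.eval_X]
      refine Finset.sum_congr rfl fun i _ => ?_
      congr 1
      · congr 1
        exact Finset.prod_congr rfl fun l _ => by ring
    have heval : ∀ k : ℕ, 1 ≤ k → Q.eval (k : ℝ) = 0 := by
      intro k hk
      have hc : (0 : ℝ) < (catalan k : ℝ) := by exact_mod_cast catalan_pos' k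
      have hmul : (catalan k : ℝ) * Q.eval (k : ℝ) = 0 := by
        rw [hQeval, Finset.mul_sum]
        have step : ∀ i ∈ Finset.range (N + 2),
            (catalan k : ℝ) * (d i * (∏ l ∈ Finset.range i, (4 * (k : ℝ) + 4 * (l : ℝ) + 2))
              * (∏ l ∈ Finset.Ico i (N + 1), ((k : ℝ) + (l : ℝ) + 2)))
            = d i * (catalan (k + i) : ℝ) * ∏ l ∈ Finset.range (N + 1), ((k : ℝ) + (l : ℝ) + 2) := by
          intro i hi
          rw [Finset.mem_range] at hi
          have h1 := catalan_prod_identity k i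
          have h2 : (∏ l ∈ Finset.range i, ((k : ℝ) + (l : ℝ) + 2))
              * ∏ l ∈ Finset.Ico i (N + 1), ((k : ℝ) + (l : ℝ) + 2)
              = ∏ l ∈ Finset.range (N + 1), ((k : ℝ) + (l : ℝ) + 2) :=
            Finset.prod_range_mul_prod_Ico _ (by omega)
          linear_combination (d i) * (catalan (k + i) : ℝ) * h2
            - d i * (∏ l ∈ Finset.Ico i (N + 1), ((k : ℝ) + (l : ℝ) + 2)) * h1
        rw [Finset.sum_congr rfl step, ← Finset.sum_mul, hsum k hk, zero_mul]
      exact (mul_eq_zero.mp hmul).resolve_left (ne_of_gt hc)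
    have hQ0 : Q = 0 := by
      apply Polynomial.eq_zero_of_infinite_isRoot
      refine Set.infinite_of_injective_forall_mem
        (f := fun k : ℕ => ((k : ℝ) + 1)) ?_ ?_
      · intro a b hab
        have hab' : (a : ℝ) + 1 = (b : ℝ) + 1 := hab
        have : (a : ℝ) = b := by linarith
        exact_mod_cast this
      · intro k
        have := heval (k + 1) (by omega)
        simp only [Set.mem_setOf_eq, Polynomial.IsRoot]
        push_cast at this ⊢
        convert this using 2
    have hdN : d (N + 1) = 0 := by
      have h0 : Q.eval (-(N : ℝ) - 2) = 0 := by rw [hQ0]; simp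
      rw [hQeval] at h0
      have hsingle : ∑ i ∈ Finset.range (N + 2), d i
          * (∏ l ∈ Finset.range i, (4 * (-(N : ℝ) - 2) + 4 * (l : ℝ) + 2))
          * (∏ l ∈ Finset.Ico i (N + 1), ((-(N : ℝ) - 2) + (l : ℝ) + 2))
          = d (N + 1) * ∏ l ∈ Finset.range (N + 1), (4 * (-(N : ℝ) - 2) + 4 * (l : ℝ) + 2) := by
        rw [Finset.sum_eq_single (N + 1)]
        · simp
        · intro i hi hne
          rw [Finset.mem_range] at hi
          have hmem : N ∈ Finset.Ico i (N + 1) := Finset.mem_Ico.mpr ⟨by omega, by omega⟩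
          rw [Finset.prod_eq_zero hmem (by ring), mul_zero]
        · intro h; exact absurd (Finset.mem_range.mpr (by omega)) h
      rw [hsingle] at h0
      have hne : (∏ l ∈ Finset.range (N + 1), (4 * (-(N : ℝ) - 2) + 4 * (l : ℝ) + 2)) ≠ 0 := by
        apply Finset.prod_ne_zero_iff.mpr
        intro l hl
        rw [Finset.mem_range] at hl
        have : (l : ℝ) ≤ N := by exact_mod_cast Nat.lt_succ_iff.mp hl
        nlinarith
      exact (mul_eq_zero.mp h0).resolve_right hne
    apply ih d
    · intro i hi
      rcases eq_or_lt_of_le (Nat.succ_le_of_lt hi) with h | h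
      · rw [← h]; exact hdN
      · exact hd i (by omega)
    · intro k hk
      have := hsum k hk
      rwa [Finset.sum_range_succ, hdN, zero_mul, add_zero] at this

theorem catalan_moment_characterization (a : ℕ → ℝ)
    (hfin : (Function.support a).Finite)
    (heven : ∀ k : ℕ, ∑' i : ℕ, a (2 * i) * (catalan (k + i) : ℝ) = (catalan k : ℝ))
    (hodd : ∀ k : ℕ, ∑' i : ℕ, a (2 * i + 1) * (catalan (k + 1 + i) : ℝ) = 0) :
    a 0 = 1 ∧ ∀ i : ℕ, 1 ≤ i → a i = 0 := by
  classical
  set N := hfin.toFinset.sup id with hN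
  have hbound : ∀ i, N < i → a i = 0 := by
    intro i hi
    by_contra h
    have hmem : i ∈ hfin.toFinset := by simpa using h
    have := Finset.le_sup (f := id) hmem
    simp only [id] at this
    omega
  have heven' : ∀ k, ∑ i ∈ Finset.range (N + 1), a (2 * i) * (catalan (k + i) : ℝ)
      = (catalan k : ℝ) := by
    intro k
    rw [← heven k]
    exact (tsum_eq_sum (by
      intro i hi
      rw [Finset.mem_range, not_lt] at hi
      rw [hbound (2 * i) (by omega), zero_mul])).symm
  have hodd' : ∀ k, ∑ i ∈ Finset.range (N + 1), a (2 * i + 1) * (catalan (k + 1 + i) : ℝ)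
      = 0 := by
    intro k
    rw [← hodd k]
    exact (tsum_eq_sum (by
      intro i hi
      rw [Finset.mem_range, not_lt] at hi
      rw [hbound (2 * i + 1) (by omega), zero_mul])).symm
  have hde : ∀ i, (a (2 * i) - if i = 0 then 1 else 0) = 0 := by
    apply catalan_shifts_indep N (fun i => a (2 * i) - if i = 0 then 1 else 0)
    · intro i hi
      rw [hbound (2 * i) (by omega), if_neg (by omega), sub_zero]
    · intro k _
      have h1 := heven' k
      have h2 : ∑ i ∈ Finset.range (N + 1), (if i = 0 then (1 : ℝ) else 0) * (catalan (k + i) : ℝ)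
          = (catalan k : ℝ) := by
        rw [Finset.sum_eq_single 0]
        · simp
        · intro b _ hb; simp [hb]
        · intro h; exact absurd (Finset.mem_range.mpr (by omega)) h
      have h3 : ∑ i ∈ Finset.range (N + 1),
          ((a (2 * i) - if i = 0 then 1 else 0) * (catalan (k + i) : ℝ))
          = (∑ i ∈ Finset.range (N + 1), a (2 * i) * (catalan (k + i) : ℝ))
            - ∑ i ∈ Finset.range (N + 1), (if i = 0 then (1 : ℝ) else 0) * (catalan (k + i) : ℝ) := by
        rw [← Finset.sum_sub_distrib]
        exact Finset.sum_congr rfl fun i _ => by ring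
      rw [h3, h1, h2, sub_self]
  have hdo : ∀ i, a (2 * i + 1) = 0 := by
    apply catalan_shifts_indep N (fun i => a (2 * i + 1))
    · intro i hi
      exact hbound (2 * i + 1) (by omega)
    · intro k hk
      obtain ⟨k', rfl⟩ : ∃ k', k = k' + 1 := ⟨k - 1, by omega⟩
      exact hodd' k'
  constructor
  · have h := hde 0
    simp at h
    linarith
  · intro i hi
    rcases Nat.even_or_odd i with ⟨j, hj⟩ | ⟨j, hj⟩
    · have hj' : i = 2 * j := by omega
      have := hde j
      rw [if_neg (by omega), sub_zero] at this
      rw [hj']; exact this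
    · rw [hj]; exact hdo j
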